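/- Let (Ω, F, μ) be a probability space, let η ∈ (0,1) and r̄ > 0, and let r, r̂ ∈ [r̄(1−η), r̄(1+η)] (so in particular r, r̂ > 0). Let A, B : Ω → ℝ be square-integrable random variables with 0 ≤ A ≤ r̂ almost everywhere, and suppose ∫ (A − B)² dμ ≤ ε̂ for some ε̂ ≥ 0. Then ∫ (A/r̂ − B/r)² dμ ≤ ε̂/r² + 4η√ε̂/(r(1−η)) + 4η²/(1−η)². -/

import Mathlib

open MeasureTheory

/-- The key estimate for learning with an uncertain retention rate: if
`0 ≤ A ≤ r̂` a.e., `∫ (A − B)² ≤ ε̂`, and `r, r̂ ∈ [r̄(1−η), r̄(1+η)]`, then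
`∫ (A/r̂ − B/r)² ≤ ε̂/r² + 4η√ε̂/(r(1−η)) + 4η²/(1−η)²`. -/
theorem rescaled_error_bound {Ω : Type*} [MeasurableSpace Ω] (μ : Measure Ω)
    [IsProbabilityMeasure μ] (η rbar r rhat εhat : ℝ)
    (hη : η ∈ Set.Ioo (0 : ℝ) 1) (hrbar : 0 < rbar)
    (hr : r ∈ Set.Icc (rbar * (1 - η)) (rbar * (1 + η)))
    (hrhat : rhat ∈ Set.Icc (rbar * (1 - η)) (rbar * (1 + η)))
    (A B : Ω → ℝ) (hA : MemLp A 2 μ) (hB : MemLp B 2 μ)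
    (hA0 : ∀ᵐ ω ∂μ, 0 ≤ A ω) (hAle : ∀ᵐ ω ∂μ, A ω ≤ rhat)
    (hεhat : 0 ≤ εhat)
    (hAB : ∫ ω, (A ω - B ω) ^ 2 ∂μ ≤ εhat) :
    ∫ ω, (A ω / rhat - B ω / r) ^ 2 ∂μ
      ≤ εhat / r ^ 2 + 4 * η * Real.sqrt εhat / (r * (1 - η)) +
        4 * η ^ 2 / (1 - η) ^ 2 := by
  obtain ⟨hη0, hη1⟩ := hη
  have h1η : 0 < 1 - η := by linarith
  have hrpos : 0 < r := lt_of_lt_of_le (by positivity) hr.1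
  have hrhatpos : 0 < rhat := lt_of_lt_of_le (by positivity) hrhat.1
  set c : ℝ := 2 * η / (1 - η) with hc
  have hcpos : 0 < c := by positivity
  -- the difference of the rates
  have hdiff : |r - rhat| ≤ 2 * η * rbar := by
    rw [abs_le]
    constructor <;> nlinarith [hr.1, hr.2, hrhat.1, hrhat.2]
  -- MemLp facts
  have hABm : MemLp (fun ω => A ω - B ω) 2 μ := hA.sub hB
  have hABabs : MemLp (fun ω => |A ω - B ω|) 2 μ := hABm.abs
  have hI2 : Integrable (fun ω => (A ω - B ω) ^ 2) μ := hABm.integrable_sq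
  have hI1 : Integrable (fun ω => |A ω - B ω|) μ :=
    (hABm.integrable (by norm_num)).abs
  -- L¹ bound via Cauchy–Schwarz
  have hL1 : ∫ ω, |A ω - B ω| ∂μ ≤ Real.sqrt εhat := by
    have hone : MemLp (fun _ : Ω => (1 : ℝ)) (ENNReal.ofReal 2) μ := by
      simpa using (memLp_const (μ := μ) (1 : ℝ) (p := ENNReal.ofReal 2))
    have h2e : ENNReal.ofReal 2 = 2 := by norm_num
    have h := integral_mul_le_Lp_mul_Lq_of_nonneg (μ := μ)
      (⟨by norm_num, by norm_num, by norm_num⟩ : Real.HolderConjugate 2 2)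
      (f := fun ω => |A ω - B ω|) (g := fun _ => (1 : ℝ))
      (Filter.Eventually.of_forall fun ω => abs_nonneg _)
      (Filter.Eventually.of_forall fun _ => zero_le_one)
      (h2e ▸ hABabs) hone
    have h2 : ∫ ω, |A ω - B ω| ^ (2:ℝ) ∂μ = ∫ ω, (A ω - B ω) ^ 2 ∂μ := by
      refine integral_congr_ae (Filter.Eventually.of_forall fun ω => ?_)
      simp [Real.rpow_two, sq_abs]
    rw [h2] at h
    have h3 : (∫ ω, (A ω - B ω) ^ 2 ∂μ) ^ ((1:ℝ)/2) ≤ Real.sqrt εhat := by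
      rw [← Real.sqrt_eq_rpow]
      exact Real.sqrt_le_sqrt hAB
    calc ∫ ω, |A ω - B ω| ∂μ
        ≤ (∫ ω, (A ω - B ω) ^ 2 ∂μ) ^ ((1:ℝ)/2) *
          (∫ ω, (fun _ : Ω => (1:ℝ)) ω ^ (2:ℝ) ∂μ) ^ ((1:ℝ)/2) := by
          simpa using h
      _ ≤ Real.sqrt εhat := by
          simp only [Real.one_rpow]
          simpa using h3
  -- pointwise bound
  have hpt : ∀ᵐ ω ∂μ, (A ω / rhat - B ω / r) ^ 2
      ≤ (A ω - B ω) ^ 2 / r ^ 2 + (2 * c / r) * |A ω - B ω| + c ^ 2 := by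
    filter_upwards [hA0, hAle] with ω h0 hle
    have key : |A ω * (1 / rhat - 1 / r)| ≤ c := by
      rw [abs_mul, abs_of_nonneg h0]
      have h1 : |1 / rhat - 1 / r| = |r - rhat| / (r * rhat) := by
        rw [div_sub_div _ _ (ne_of_gt hrhatpos) (ne_of_gt hrpos), abs_div,
          abs_of_pos (mul_pos hrhatpos hrpos), one_mul, mul_one, mul_comm rhat r]
      rw [h1]
      have : A ω * (|r - rhat| / (r * rhat)) ≤ rhat * ((2 * η * rbar) / (r * rhat)) := by
        apply mul_le_mul hle (by gcongr) (by positivity) (le_of_lt hrhatpos)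
      calc A ω * (|r - rhat| / (r * rhat)) ≤ rhat * ((2 * η * rbar) / (r * rhat)) := this
        _ = 2 * η * rbar / r := by field_simp
        _ ≤ c := by
            rw [hc, div_le_div_iff₀ hrpos h1η]
            nlinarith [hr.1]
    have heq : A ω / rhat - B ω / r = (A ω - B ω) / r + A ω * (1 / rhat - 1 / r) := by
      field_simp; ring
    rw [heq]
    set x := (A ω - B ω) / r with hx
    set y := A ω * (1 / rhat - 1 / r) with hy
    have habs : |x| = |A ω - B ω| / r := by
      rw [hx, abs_div, abs_of_pos hrpos]
    have hx2 : x ^ 2 = (A ω - B ω) ^ 2 / r ^ 2 := by rw [hx, div_pow]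
    have h1 : x * y ≤ |x| * c :=
      le_trans (le_abs_self _) (by rw [abs_mul]; exact mul_le_mul_of_nonneg_left key (abs_nonneg _))
    have h2 : y ^ 2 ≤ c ^ 2 :=
      sq_le_sq' (by linarith [neg_abs_le y]) (le_trans (le_abs_self y) key)
    calc (x + y) ^ 2 ≤ x ^ 2 + 2 * (|x| * c) + c ^ 2 := by nlinarith
      _ = (A ω - B ω) ^ 2 / r ^ 2 + (2 * c / r) * |A ω - B ω| + c ^ 2 := by
          rw [hx2, habs]; ring
  -- integrate
  have hIlhs : Integrable (fun ω => (A ω / rhat - B ω / r) ^ 2) μ := by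
    have : MemLp (fun ω => A ω / rhat - B ω / r) 2 μ := by
      simpa [div_eq_inv_mul, Pi.sub_def] using (hA.const_mul rhat⁻¹).sub (hB.const_mul r⁻¹)
    exact this.integrable_sq
  have hIrhs : Integrable
      (fun ω => (A ω - B ω) ^ 2 / r ^ 2 + (2 * c / r) * |A ω - B ω| + c ^ 2) μ := by
    exact ((hI2.div_const _).add (hI1.const_mul _)).add (integrable_const _)
  calc ∫ ω, (A ω / rhat - B ω / r) ^ 2 ∂μ
      ≤ ∫ ω, ((A ω - B ω) ^ 2 / r ^ 2 + (2 * c / r) * |A ω - B ω| + c ^ 2) ∂μ :=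
        integral_mono_ae hIlhs hIrhs hpt
    _ = (∫ ω, (A ω - B ω) ^ 2 ∂μ) / r ^ 2 + (2 * c / r) * ∫ ω, |A ω - B ω| ∂μ + c ^ 2 := by
        have hIa : Integrable
            (fun ω => (A ω - B ω) ^ 2 / r ^ 2 + (2 * c / r) * |A ω - B ω|) μ :=
          (hI2.div_const _).add (hI1.const_mul _)
        rw [integral_add hIa (integrable_const _),
          integral_add (hI2.div_const _) (hI1.const_mul _), integral_div,
          integral_const_mul, integral_const]
        simp
    _ ≤ εhat / r ^ 2 + 4 * η * Real.sqrt εhat / (r * (1 - η)) + 4 * η ^ 2 / (1 - η) ^ 2 := by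
        have hs : 0 ≤ Real.sqrt εhat := Real.sqrt_nonneg _
        have h1 : (∫ ω, (A ω - B ω) ^ 2 ∂μ) / r ^ 2 ≤ εhat / r ^ 2 := by gcongr
        have h2 : (2 * c / r) * ∫ ω, |A ω - B ω| ∂μ ≤ 4 * η * Real.sqrt εhat / (r * (1 - η)) := by
          calc (2 * c / r) * ∫ ω, |A ω - B ω| ∂μ ≤ (2 * c / r) * Real.sqrt εhat := by
                apply mul_le_mul_of_nonneg_left hL1 (by positivity)
            _ = 4 * η * Real.sqrt εhat / (r * (1 - η)) := by
                rw [hc]; field_simp; ring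
        have h3 : c ^ 2 = 4 * η ^ 2 / (1 - η) ^ 2 := by rw [hc]; field_simp; ring
        linarith
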